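/- Let F be a finite field with q elements, let k, l be natural numbers and set n = k + l. Then q^{k·l} · N = ∏_{i=0}^{n-1} (q^n − q^i), where N is the number of pairs (i, p) consisting of an injective F-linear map i : F^l → F^n and a surjective F-linear map p : F^n → F^k with ker p = range i (i.e. short exact sequences 0 → F^l → F^n → F^k → 0 with middle term the standard F^n). Equivalently, the groupoid cardinality of the groupoid of extensions of F^k by F^l with middle term isomorphic to F^n equals q^{−kl}. -/

import Mathlib

open LinearMap Submodule

section Aux

variable {F : Type*} [Field F]

/-- Composing with a fixed linear equivalence gives an equivalence between spaces of
linear equivalences. -/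
def linEquivCongrLeft {A B C : Type*} [AddCommGroup A] [AddCommGroup B] [AddCommGroup C]
    [Module F A] [Module F B] [Module F C] (ψ : A ≃ₗ[F] B) :
    (A ≃ₗ[F] C) ≃ (B ≃ₗ[F] C) where
  toFun e := ψ.symm.trans e
  invFun f := ψ.trans f
  left_inv e := by ext x; simp
  right_inv f := by ext x; simp

/-- Surjections with prescribed kernel `W` correspond to linear equivalences from the
quotient by `W`. -/
noncomputable def surjEquiv {M N : Type*} [AddCommGroup M] [AddCommGroup N]
    [Module F M] [Module F N] (W : Submodule F M) :
    {p : M →ₗ[F] N // Function.Surjective p ∧ ker p = W} ≃ ((M ⧸ W) ≃ₗ[F] N) where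
  toFun p := LinearEquiv.ofBijective (W.liftQ p.1 p.2.2.ge)
    ⟨by
      rw [← LinearMap.ker_eq_bot]
      exact Submodule.ker_liftQ_eq_bot' W p.1 p.2.2.symm,
     by
      intro x
      obtain ⟨y, hy⟩ := p.2.1 x
      exact ⟨W.mkQ y, by simpa using hy⟩⟩
  invFun e := ⟨e.toLinearMap ∘ₗ W.mkQ, e.surjective.comp W.mkQ_surjective, by
    rw [LinearMap.ker_comp, LinearEquiv.ker, Submodule.comap_bot, Submodule.ker_mkQ]⟩
  left_inv p := by
    apply Subtype.ext
    apply LinearMap.ext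
    intro x
    simp [LinearEquiv.ofBijective_apply]
    exact rfl
  right_inv e := by
    apply LinearEquiv.toLinearMap_injective
    apply Submodule.linearMap_qext
    apply LinearMap.ext
    intro x
    simp [LinearEquiv.ofBijective_apply]
    exact rfl

theorem injective_iff_linearIndependent {M N : Type*} [AddCommGroup M] [AddCommGroup N]
    [Module F M] [Module F N] {ι : Type*} [Fintype ι] (b : Module.Basis ι F M) (f : M →ₗ[F] N) :
    Function.Injective f ↔ LinearIndependent F (f ∘ b) := by
  constructor
  · intro h
    exact b.linearIndependent.map' f (LinearMap.ker_eq_bot.2 h)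
  · intro h
    rw [← LinearMap.ker_eq_bot, LinearMap.ker_eq_bot']
    intro m hm
    have hz : ∀ j, b.repr m j = 0 := by
      apply Fintype.linearIndependent_iff.1 h
      calc ∑ j, b.repr m j • (f ∘ b) j = f (∑ j, b.repr m j • b j) := by
            simp only [Function.comp_apply, map_sum, map_smul]
        _ = f m := by rw [b.sum_repr m]
        _ = 0 := hm
    have : b.repr m = 0 := by ext j; simpa using hz j
    simpa using congrArg b.repr.symm this

/-- Injective linear maps from `Fin l → F` correspond to linearly independent families. -/
noncomputable def injEquiv (l : ℕ) {N : Type*} [AddCommGroup N] [Module F N] :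
    {s : Fin l → N // LinearIndependent F s} ≃
      {f : (Fin l → F) →ₗ[F] N // Function.Injective f} := by
  refine Equiv.subtypeEquiv ((Pi.basisFun F (Fin l)).constr F).toEquiv (fun s => ?_)
  rw [injective_iff_linearIndependent (Pi.basisFun F (Fin l))]
  have : (((Pi.basisFun F (Fin l)).constr F s : ((Fin l → F) →ₗ[F] N)) ∘ (Pi.basisFun F (Fin l)))
      = s := by
    funext j
    exact (Pi.basisFun F (Fin l)).constr_basis F s j
  rw [LinearEquiv.coe_toEquiv, this]

end Aux

/-- Over a finite field `F` with `q` elements, the number `N` of short exact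
sequences `0 → F^l → F^{k+l} → F^k → 0` (with middle term the standard
`F^{k+l}`) satisfies `q^{k·l} · N = ∏_{i=0}^{k+l-1} (q^{k+l} − q^i) = |GL_{k+l}(F)|`;
equivalently, the groupoid cardinality of the groupoid of extensions of `F^k`
by `F^l` with middle term isomorphic to `F^{k+l}` equals `q^{−kl}`. -/
theorem ext_groupoid_cardinality (F : Type*) [Field F] [Fintype F] (q k l : ℕ)
    (hq : Fintype.card F = q) :
    q ^ (k * l) *
        Nat.card {ip : ((Fin l → F) →ₗ[F] (Fin (k + l) → F)) ×
            ((Fin (k + l) → F) →ₗ[F] (Fin k → F)) //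
          Function.Injective ip.1 ∧ Function.Surjective ip.2 ∧
            LinearMap.ker ip.2 = LinearMap.range ip.1}
      = ∏ i ∈ Finset.range (k + l), (q ^ (k + l) - q ^ i) := by
  subst hq
  set q := Fintype.card F with hq
  set n := k + l with hn
  -- Step 1: split off the injection
  have E1 : {ip : ((Fin l → F) →ₗ[F] (Fin n → F)) × ((Fin n → F) →ₗ[F] (Fin k → F)) //
        Function.Injective ip.1 ∧ Function.Surjective ip.2 ∧
          LinearMap.ker ip.2 = LinearMap.range ip.1} ≃
      Σ i : {i : (Fin l → F) →ₗ[F] (Fin n → F) // Function.Injective i},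
        {p : (Fin n → F) →ₗ[F] (Fin k → F) //
          Function.Surjective p ∧ LinearMap.ker p = LinearMap.range i.1} :=
    { toFun := fun x => ⟨⟨x.1.1, x.2.1⟩, ⟨x.1.2, x.2.2.1, x.2.2.2⟩⟩
      invFun := fun x => ⟨⟨x.1.1, x.2.1⟩, ⟨x.1.2, x.2.2.1, x.2.2.2⟩⟩
      left_inv := fun _ => rfl
      right_inv := fun _ => rfl }
  -- Step 2: identify each fiber with `(F^k ≃ₗ F^k)`
  have fiber : ∀ i : {i : (Fin l → F) →ₗ[F] (Fin n → F) // Function.Injective i},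
      {p : (Fin n → F) →ₗ[F] (Fin k → F) //
          Function.Surjective p ∧ LinearMap.ker p = LinearMap.range i.1} ≃
        ((Fin k → F) ≃ₗ[F] (Fin k → F)) := by
    intro i
    refine (surjEquiv (LinearMap.range i.1)).trans (linEquivCongrLeft ?_)
    apply (FiniteDimensional.nonempty_linearEquiv_of_finrank_eq ?_).some
    have h1 : Module.finrank F (LinearMap.range i.1) = l := by
      rw [LinearMap.finrank_range_of_inj i.2]
      simp
    have h2 := Submodule.finrank_quotient_add_finrank (LinearMap.range i.1)
    rw [h1] at h2
    have h3 : Module.finrank F (Fin n → F) = n := by simp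
    rw [h3] at h2
    have h4 : Module.finrank F (Fin k → F) = k := by simp
    omega
  have E : {ip : ((Fin l → F) →ₗ[F] (Fin n → F)) × ((Fin n → F) →ₗ[F] (Fin k → F)) //
        Function.Injective ip.1 ∧ Function.Surjective ip.2 ∧
          LinearMap.ker ip.2 = LinearMap.range ip.1} ≃
      {i : (Fin l → F) →ₗ[F] (Fin n → F) // Function.Injective i} ×
        ((Fin k → F) ≃ₗ[F] (Fin k → F)) :=
    E1.trans ((Equiv.sigmaCongrRight fiber).trans (Equiv.sigmaEquivProd _ _))
  rw [Nat.card_congr E, Nat.card_prod]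
  -- count injections
  have hinj : Nat.card {i : (Fin l → F) →ₗ[F] (Fin n → F) // Function.Injective i}
      = ∏ i : Fin l, (q ^ n - q ^ (i : ℕ)) := by
    rw [← Nat.card_congr (injEquiv l)]
    have := card_linearIndependent (K := F) (V := Fin n → F) (k := l)
      (by simp [hn])
    simpa [hq] using this
  -- count automorphisms
  have hGL : Nat.card ((Fin k → F) ≃ₗ[F] (Fin k → F)) = ∏ i : Fin k, (q ^ k - q ^ (i : ℕ)) := by
    rw [← Nat.card_congr ((Matrix.GeneralLinearGroup.toLin.trans
      (LinearMap.GeneralLinearGroup.generalLinearEquiv F (Fin k → F))).toEquiv)]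
    exact Matrix.card_GL_field k
  rw [hinj, hGL]
  -- arithmetic
  have hq2 : 2 ≤ q := Fintype.one_lt_card
  rw [Fin.prod_univ_eq_prod_range (fun i => q ^ n - q ^ i) l,
    Fin.prod_univ_eq_prod_range (fun i => q ^ k - q ^ i) k]
  rw [hn, add_comm k l, Finset.prod_range_add]
  have key : ∀ i, i < k → q ^ (l + k) - q ^ (l + i) = q ^ l * (q ^ k - q ^ i) := by
    intro i _
    rw [Nat.mul_sub, ← pow_add, ← pow_add]
  rw [Finset.prod_congr rfl (fun i hi => key i (Finset.mem_range.1 hi))]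
  rw [Finset.prod_mul_distrib, Finset.prod_const, Finset.card_range, ← pow_mul]
  ring
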